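/- Let A(x,y) = (2/p₂)(p₁ − p₂s₁s₂ + p₁s₂² + (2p₁s₂ − p₂s₁)x + (p₂x − p₁y + p₂s₂)y) with p₂ ≠ 0 and p₁² + p₂² ≠ 0. Then the solutions of the system A(x,y) = 0, x² + y² = 1 are given by (x,y) = (−s₂, ±√(1−s₂²)) (when |s₂| ≤ 1) together with x± = (p₁p₂s₁ − p₁²s₂ ± p₂√D)/(p₁²+p₂²), y± = (p₂²s₁ − p₁p₂s₂ ∓ p₁√D)/(p₁²+p₂²), where D = p₁² + p₂² − (p₂s₁ − p₁s₂)² ≥ 0. In particular, if |s₂| > 1 and D < 0, the system has no real solutions. -/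

import Mathlib

theorem A_zeros_on_circle (p₁ p₂ s₁ s₂ : ℝ) (hp₂ : p₂ ≠ 0)
    (hp : (p₁, p₂) ≠ (0, 0)) :
    (∀ x y : ℝ,
        ((2 / p₂) * (p₁ - p₂ * s₁ * s₂ + p₁ * s₂ ^ 2
              + (2 * p₁ * s₂ - p₂ * s₁) * x
              + (p₂ * x - p₁ * y + p₂ * s₂) * y) = 0 ∧ x ^ 2 + y ^ 2 = 1)
          ↔ ((|s₂| ≤ 1 ∧ x = -s₂ ∧
                (y = Real.sqrt (1 - s₂ ^ 2) ∨ y = -Real.sqrt (1 - s₂ ^ 2)))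
            ∨ (0 ≤ p₁ ^ 2 + p₂ ^ 2 - (p₂ * s₁ - p₁ * s₂) ^ 2 ∧
                ((x = (p₁ * p₂ * s₁ - p₁ ^ 2 * s₂
                        + p₂ * Real.sqrt (p₁ ^ 2 + p₂ ^ 2 - (p₂ * s₁ - p₁ * s₂) ^ 2))
                      / (p₁ ^ 2 + p₂ ^ 2) ∧
                  y = (p₂ ^ 2 * s₁ - p₁ * p₂ * s₂
                        - p₁ * Real.sqrt (p₁ ^ 2 + p₂ ^ 2 - (p₂ * s₁ - p₁ * s₂) ^ 2))
                      / (p₁ ^ 2 + p₂ ^ 2)) ∨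
                 (x = (p₁ * p₂ * s₁ - p₁ ^ 2 * s₂
                        - p₂ * Real.sqrt (p₁ ^ 2 + p₂ ^ 2 - (p₂ * s₁ - p₁ * s₂) ^ 2))
                      / (p₁ ^ 2 + p₂ ^ 2) ∧
                  y = (p₂ ^ 2 * s₁ - p₁ * p₂ * s₂
                        + p₁ * Real.sqrt (p₁ ^ 2 + p₂ ^ 2 - (p₂ * s₁ - p₁ * s₂) ^ 2))
                      / (p₁ ^ 2 + p₂ ^ 2)))))) ∧
    (1 < |s₂| → p₁ ^ 2 + p₂ ^ 2 - (p₂ * s₁ - p₁ * s₂) ^ 2 < 0 →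
      ∀ x y : ℝ,
        ¬((2 / p₂) * (p₁ - p₂ * s₁ * s₂ + p₁ * s₂ ^ 2
              + (2 * p₁ * s₂ - p₂ * s₁) * x
              + (p₂ * x - p₁ * y + p₂ * s₂) * y) = 0 ∧ x ^ 2 + y ^ 2 = 1)) := by
  have hq : 0 < p₁ ^ 2 + p₂ ^ 2 := by positivity
  have hqne : p₁ ^ 2 + p₂ ^ 2 ≠ 0 := ne_of_gt hq
  have key : ∀ x y : ℝ,
      ((2 / p₂) * (p₁ - p₂ * s₁ * s₂ + p₁ * s₂ ^ 2
            + (2 * p₁ * s₂ - p₂ * s₁) * x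
            + (p₂ * x - p₁ * y + p₂ * s₂) * y) = 0 ∧ x ^ 2 + y ^ 2 = 1)
        ↔ ((|s₂| ≤ 1 ∧ x = -s₂ ∧
              (y = Real.sqrt (1 - s₂ ^ 2) ∨ y = -Real.sqrt (1 - s₂ ^ 2)))
          ∨ (0 ≤ p₁ ^ 2 + p₂ ^ 2 - (p₂ * s₁ - p₁ * s₂) ^ 2 ∧
              ((x = (p₁ * p₂ * s₁ - p₁ ^ 2 * s₂
                      + p₂ * Real.sqrt (p₁ ^ 2 + p₂ ^ 2 - (p₂ * s₁ - p₁ * s₂) ^ 2))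
                    / (p₁ ^ 2 + p₂ ^ 2) ∧
                y = (p₂ ^ 2 * s₁ - p₁ * p₂ * s₂
                      - p₁ * Real.sqrt (p₁ ^ 2 + p₂ ^ 2 - (p₂ * s₁ - p₁ * s₂) ^ 2))
                    / (p₁ ^ 2 + p₂ ^ 2)) ∨
               (x = (p₁ * p₂ * s₁ - p₁ ^ 2 * s₂
                      - p₂ * Real.sqrt (p₁ ^ 2 + p₂ ^ 2 - (p₂ * s₁ - p₁ * s₂) ^ 2))
                    / (p₁ ^ 2 + p₂ ^ 2) ∧
                y = (p₂ ^ 2 * s₁ - p₁ * p₂ * s₂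
                      + p₁ * Real.sqrt (p₁ ^ 2 + p₂ ^ 2 - (p₂ * s₁ - p₁ * s₂) ^ 2))
                    / (p₁ ^ 2 + p₂ ^ 2))))) := by
    intro x y
    constructor
    · rintro ⟨hA, hC⟩
      have h2p : (2 : ℝ) / p₂ ≠ 0 := div_ne_zero two_ne_zero hp₂
      have h1 : p₁ - p₂ * s₁ * s₂ + p₁ * s₂ ^ 2
            + (2 * p₁ * s₂ - p₂ * s₁) * x
            + (p₂ * x - p₁ * y + p₂ * s₂) * y = 0 :=
        (mul_eq_zero.1 hA).resolve_left h2p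
      have h0 : (x + s₂) * (p₁ * x + p₂ * y + p₁ * s₂ - p₂ * s₁) = 0 := by
        linear_combination h1 + p₁ * hC
      rcases mul_eq_zero.1 h0 with h | h
      · left
        have hx : x = -s₂ := by linarith
        have hy2 : y ^ 2 = 1 - s₂ ^ 2 := by
          rw [hx] at hC; nlinarith [hC]
        have hs : |s₂| ≤ 1 := by
          rw [abs_le]; constructor <;> nlinarith [sq_nonneg y]
        refine ⟨hs, hx, ?_⟩
        have hsq : Real.sqrt (1 - s₂ ^ 2) = |y| := by
          rw [← hy2]; exact Real.sqrt_sq_eq_abs y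
        rcases abs_cases y with ⟨h', _⟩ | ⟨h', _⟩
        · left; rw [hsq, h']
        · right; rw [hsq, h']; ring
      · right
        have hD : p₁ ^ 2 + p₂ ^ 2 - (p₂ * s₁ - p₁ * s₂) ^ 2 = (p₂ * x - p₁ * y) ^ 2 := by
          linear_combination -(p₁ ^ 2 + p₂ ^ 2) * hC
            + (p₁ * x + p₂ * y + p₂ * s₁ - p₁ * s₂) * h
        refine ⟨hD ▸ sq_nonneg _, ?_⟩
        rcases le_or_gt 0 (p₂ * x - p₁ * y) with ht | ht
        · left
          have hsq : Real.sqrt (p₁ ^ 2 + p₂ ^ 2 - (p₂ * s₁ - p₁ * s₂) ^ 2)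
              = p₂ * x - p₁ * y := by
            rw [hD]; exact Real.sqrt_sq ht
          rw [hsq]
          constructor
          · rw [eq_div_iff hqne]; linear_combination p₁ * h
          · rw [eq_div_iff hqne]; linear_combination p₂ * h
        · right
          have hsq : Real.sqrt (p₁ ^ 2 + p₂ ^ 2 - (p₂ * s₁ - p₁ * s₂) ^ 2)
              = -(p₂ * x - p₁ * y) := by
            rw [hD, show (p₂ * x - p₁ * y) ^ 2 = (-(p₂ * x - p₁ * y)) ^ 2 by ring,
              Real.sqrt_sq (by linarith)]
          rw [hsq]
          constructor
          · rw [eq_div_iff hqne]; linear_combination p₁ * h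
          · rw [eq_div_iff hqne]; linear_combination p₂ * h
    · rintro (⟨hs, hx, hy | hy⟩ | ⟨hD, ⟨hx, hy⟩ | ⟨hx, hy⟩⟩)
      · have h1 : (0:ℝ) ≤ 1 - s₂ ^ 2 := by
          rw [abs_le] at hs; nlinarith
        have hsq : Real.sqrt (1 - s₂ ^ 2) ^ 2 = 1 - s₂ ^ 2 := Real.sq_sqrt h1
        have hC : x ^ 2 + y ^ 2 = 1 := by rw [hx, hy]; nlinarith [hsq]
        refine ⟨?_, hC⟩
        have hxs : x + s₂ = 0 := by rw [hx]; ring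
        linear_combination (2 / p₂) * (p₁ * x + p₂ * y + p₁ * s₂ - p₂ * s₁) * hxs
          - (2 * p₁ / p₂) * hC
      · have h1 : (0:ℝ) ≤ 1 - s₂ ^ 2 := by
          rw [abs_le] at hs; nlinarith
        have hsq : Real.sqrt (1 - s₂ ^ 2) ^ 2 = 1 - s₂ ^ 2 := Real.sq_sqrt h1
        have hC : x ^ 2 + y ^ 2 = 1 := by rw [hx, hy]; nlinarith [hsq]
        refine ⟨?_, hC⟩
        have hxs : x + s₂ = 0 := by rw [hx]; ring
        linear_combination (2 / p₂) * (p₁ * x + p₂ * y + p₁ * s₂ - p₂ * s₁) * hxs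
          - (2 * p₁ / p₂) * hC
      · set S := Real.sqrt (p₁ ^ 2 + p₂ ^ 2 - (p₂ * s₁ - p₁ * s₂) ^ 2) with hSdef
        have hS2 : S ^ 2 = p₁ ^ 2 + p₂ ^ 2 - (p₂ * s₁ - p₁ * s₂) ^ 2 := Real.sq_sqrt hD
        have hline : p₁ * x + p₂ * y + p₁ * s₂ - p₂ * s₁ = 0 := by
          rw [hx, hy]; field_simp; ring
        have hC : x ^ 2 + y ^ 2 = 1 := by
          rw [hx, hy, div_pow, div_pow, ← add_div, div_eq_one_iff_eq (by positivity)]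
          linear_combination (p₁ ^ 2 + p₂ ^ 2) * hS2
        refine ⟨?_, hC⟩
        linear_combination (2 / p₂) * (x + s₂) * hline - (2 * p₁ / p₂) * hC
      · set S := Real.sqrt (p₁ ^ 2 + p₂ ^ 2 - (p₂ * s₁ - p₁ * s₂) ^ 2) with hSdef
        have hS2 : S ^ 2 = p₁ ^ 2 + p₂ ^ 2 - (p₂ * s₁ - p₁ * s₂) ^ 2 := Real.sq_sqrt hD
        have hline : p₁ * x + p₂ * y + p₁ * s₂ - p₂ * s₁ = 0 := by
          rw [hx, hy]; field_simp; ring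
        have hC : x ^ 2 + y ^ 2 = 1 := by
          rw [hx, hy, div_pow, div_pow, ← add_div, div_eq_one_iff_eq (by positivity)]
          linear_combination (p₁ ^ 2 + p₂ ^ 2) * hS2
        refine ⟨?_, hC⟩
        linear_combination (2 / p₂) * (x + s₂) * hline - (2 * p₁ / p₂) * hC
  refine ⟨key, ?_⟩
  intro hs hD x y hxy
  rcases (key x y).1 hxy with ⟨h1, _⟩ | ⟨h1, _⟩
  · linarith
  · linarith
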